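/- For any proper cone $K \subseteq \mathbb{R}^n$, the set $S(K)$ of $K$-semipositive matrices contains a basis of the real vector space $M_n(\mathbb{R})$ of $n \times n$ real matrices, i.e. there exist $n^2$ linearly independent $K$-semipositive matrices. -/

import Mathlib

open Matrix Set

/-- A proper cone in `ℝ^n`: a convex cone that is closed, pointed and has
nonempty interior. -/
def IsProperCone {n : ℕ} (K : Set (Fin n → ℝ)) : Prop :=
  (∀ x ∈ K, ∀ y ∈ K, x + y ∈ K) ∧
  (∀ a : ℝ, 0 ≤ a → ∀ x ∈ K, a • x ∈ K) ∧
  IsClosed K ∧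
  K ∩ (-K) = {(0 : Fin n → ℝ)} ∧
  (interior K).Nonempty

/-- `A` is `K`-semipositive. -/
def Semipositive {n : ℕ} (K : Set (Fin n → ℝ)) (A : Matrix (Fin n) (Fin n) ℝ) : Prop :=
  ∃ x ∈ interior K, A.mulVec x ∈ interior K

/-- `S(K)` contains a basis of `Mₙ(ℝ)`: there are `n²` linearly independent
`K`-semipositive matrices. -/
noncomputable def pertMap (n : ℕ) (ε : ℝ) :
    Matrix (Fin n) (Fin n) ℝ →ₗ[ℝ] Matrix (Fin n) (Fin n) ℝ where
  toFun M := ε • M + (∑ p : Fin n, ∑ q : Fin n, M p q) • (1 : Matrix (Fin n) (Fin n) ℝ)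
  map_add' A B := by
    simp only [Matrix.add_apply, Finset.sum_add_distrib, add_smul, smul_add]
    module
  map_smul' c M := by
    simp only [Matrix.smul_apply, smul_eq_mul, ← Finset.mul_sum, RingHom.id_apply]
    rw [mul_smul]
    module

lemma pertMap_inj (n : ℕ) {ε : ℝ} (hε : 0 < ε) : Function.Injective (pertMap n ε) := by
  rw [← LinearMap.ker_eq_bot, LinearMap.ker_eq_bot']
  intro M hM
  set s : ℝ := ∑ p : Fin n, ∑ q : Fin n, M p q with hs
  have hentry : ∀ p q : Fin n, ε * M p q + s * (if p = q then (1:ℝ) else 0) = 0 := by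
    intro p q
    have := congrFun (congrFun hM p) q
    simpa [pertMap, Matrix.one_apply, mul_ite] using this
  simp only [mul_ite, mul_one, mul_zero] at hentry
  have hsum : ε * s + s * n = 0 := by
    have h0 : (0:ℝ) = ∑ p : Fin n, ∑ q : Fin n,
        (ε * M p q + s * (if p = q then (1:ℝ) else 0)) := by
      simp [hentry]
    simpa [Finset.sum_add_distrib, ← Finset.mul_sum, Finset.sum_ite_eq,
      ← hs, mul_comm] using h0.symm
  have hs0 : s = 0 := by
    have h : s * (ε + n) = 0 := by ring_nf; ring_nf at hsum; linarith
    have : ε + (n:ℝ) > 0 := by positivity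
    rcases mul_eq_zero.mp h with h' | h'
    · exact h'
    · linarith
  ext p q
  have := hentry p q
  rw [hs0] at this
  simp at this
  rcases this with h | h
  · exact absurd h (ne_of_gt hε)
  · simpa using h

lemma sum_stdBasisMatrix_entries (n : ℕ) (p q : Fin n) :
    (∑ a : Fin n, ∑ b : Fin n, Matrix.single p q (1:ℝ) a b) = 1 := by
  simp [Matrix.single, ite_and, Finset.sum_ite_eq, Finset.sum_ite_eq']

theorem stmt_13 {n : ℕ} (K : Set (Fin n → ℝ)) (hK : IsProperCone K) :
    ∃ b : Fin (n ^ 2) → Matrix (Fin n) (Fin n) ℝ,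
      LinearIndependent ℝ b ∧ ∀ i, Semipositive K (b i) := by
  obtain ⟨x, hx⟩ := hK.2.2.2.2
  obtain ⟨δ, hδ, hball⟩ := Metric.isOpen_iff.mp isOpen_interior x hx
  set ε : ℝ := δ / (‖x‖ + 1) with hεdef
  have hεpos : 0 < ε := by positivity
  let e : Fin (n ^ 2) ≃ Fin n × Fin n := (finCongr (sq n)).trans finProdFinEquiv.symm
  refine ⟨fun i => pertMap n ε (Matrix.single (e i).1 (e i).2 1), ?_, ?_⟩
  · have h1 : LinearIndependent ℝ fun i : Fin (n ^ 2) =>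
        (Matrix.stdBasis ℝ (Fin n) (Fin n)) (e i) :=
      (Matrix.stdBasis ℝ (Fin n) (Fin n)).linearIndependent.comp e e.injective
    have h2 := h1.map' (pertMap n ε) (LinearMap.ker_eq_bot.mpr (pertMap_inj n hεpos))
    have heq : ∀ i : Fin (n ^ 2), (Matrix.stdBasis ℝ (Fin n) (Fin n)) (e i)
        = Matrix.single (e i).1 (e i).2 (1:ℝ) := fun i => by
      rw [show e i = ((e i).1, (e i).2) from rfl, Matrix.stdBasis_eq_single]
    simpa [Function.comp_def, heq] using h2
  · intro i
    set p := (e i).1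
    set q := (e i).2
    have hform : pertMap n ε (Matrix.single p q 1)
        = ε • Matrix.single p q 1 + (1 : Matrix (Fin n) (Fin n) ℝ) := by
      simp [pertMap, sum_stdBasisMatrix_entries]
    refine ⟨x, hx, hball ?_⟩
    show ((pertMap n ε) (Matrix.single p q 1)).mulVec x ∈ Metric.ball x δ
    rw [hform, Matrix.add_mulVec, Matrix.one_mulVec, Matrix.smul_mulVec]
    rw [Metric.mem_ball, dist_eq_norm, add_sub_cancel_right, norm_smul]
    have hle : ‖(Matrix.single p q (1:ℝ)).mulVec x‖ ≤ ‖x‖ := by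
      rw [pi_norm_le_iff_of_nonneg (norm_nonneg x)]
      intro r
      have : (Matrix.single p q (1:ℝ)).mulVec x r
          = if p = r then x q else 0 := by
        simp [Matrix.mulVec, dotProduct, Matrix.single, ite_and,
          Finset.sum_ite_eq, Finset.sum_ite_eq']
      rw [this]
      split
      · exact norm_le_pi_norm x q
      · simp
    calc ‖ε‖ * ‖(Matrix.single p q (1:ℝ)).mulVec x‖
        ≤ ε * ‖x‖ := by
          rw [Real.norm_of_nonneg hεpos.le]
          exact mul_le_mul_of_nonneg_left hle hεpos.le
      _ < δ := by
          rw [hεdef, div_mul_eq_mul_div, div_lt_iff₀ (by positivity)]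
          nlinarith [norm_nonneg x]
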